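/- Let m₁, m₂ ≥ 1, set m = max(m₁,m₂), and let (μ¹,μ²), (ν¹,ν²) ∈ M(m₁,m₂); set μ = μ¹ − μ² and ν = ν¹ − ν². Then for every function f : ℝ^d → ℝ with ‖f‖_L ≤ 1 one has (∫ f dμ − ∫ f dν)² ≤ 2m² · γ_2((μ¹,μ²),(ν¹,ν²))²; consequently sup_{f : ‖f‖_L ≤ 1} (∫ f dμ − ∫ f dν)² ≤ 2m² · γ_2((μ¹,μ²),(ν¹,ν²))². -/

import Mathlib

open MeasureTheory Set Filter

noncomputable section

/-- `ℝ^d` with the Euclidean norm. -/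
abbrev Euc (d : ℕ) := EuclideanSpace ℝ (Fin d)

/-- The bounded metric `ρ(x,y) = min (1, ‖x - y‖)`. -/
def rho {d : ℕ} (x y : Euc d) : ℝ := min 1 (dist x y)

/-- `M(m)`: finite nonnegative Borel measures on `ℝ^d` with total mass `m`. -/
def Mset (d : ℕ) (m : ℝ) : Set (Measure (Euc d)) :=
  {μ | μ Set.univ = ENNReal.ofReal m}

/-- `H(μ,ν)`: joint representations of the pair `(μ,ν)`, where `μ, ν ∈ M(m)`. -/
def Hrep {d : ℕ} (m : ℝ) (μ ν : Measure (Euc d)) : Set (Measure (Euc d × Euc d)) :=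
  {Q | ∀ A : Set (Euc d), MeasurableSet A →
      Q (A ×ˢ Set.univ) = ENNReal.ofReal m * μ A ∧
      Q (Set.univ ×ˢ A) = ENNReal.ofReal m * ν A}

/-- The Wasserstein distance `W_p` on `M(m)` associated with the metric `ρ`. -/
def Wp {d : ℕ} (p m : ℝ) (μ ν : Measure (Euc d)) : ℝ :=
  sInf ((fun Q : Measure (Euc d × Euc d) => ∫ z, rho z.1 z.2 ^ p ∂Q) '' Hrep m μ ν) ^ (1 / p)

/-- The metric `γ_p` on `M(m₁,m₂) = M(m₁) × M(m₂)`. -/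
def gammap {d : ℕ} (p m₁ m₂ : ℝ) (x y : Measure (Euc d) × Measure (Euc d)) : ℝ :=
  (Wp p m₁ x.1 y.1 ^ p + Wp p m₂ x.2 y.2 ^ p) ^ (1 / p)

lemma rho_nonneg' {d : ℕ} (x y : Euc d) : 0 ≤ rho x y := le_min zero_le_one dist_nonneg
lemma rho_le_one' {d : ℕ} (x y : Euc d) : rho x y ≤ 1 := min_le_left _ _

lemma rpow_two'' (x : ℝ) : x ^ (2:ℝ) = x ^ 2 := by
  rw [show (2:ℝ) = ((2:ℕ):ℝ) by norm_num, Real.rpow_natCast]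

lemma key_lemma {d : ℕ} {m : ℝ} (hm : 1 ≤ m) {μ ν : Measure (Euc d)}
    (hμ : μ Set.univ = ENNReal.ofReal m) (hν : ν Set.univ = ENNReal.ofReal m)
    {f : Euc d → ℝ} (hf : ∀ a b : Euc d, |f a - f b| ≤ rho a b) :
    (∫ x, f x ∂μ - ∫ x, f x ∂ν) ^ 2 ≤
      sInf ((fun Q : Measure (Euc d × Euc d) => ∫ z, rho z.1 z.2 ^ (2:ℝ) ∂Q) '' Hrep m μ ν) := by
  have hm0 : (0:ℝ) ≤ m := le_trans zero_le_one hm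
  have hm0' : (0:ℝ) < m := lt_of_lt_of_le zero_lt_one hm
  haveI : IsFiniteMeasure μ := ⟨by rw [hμ]; exact ENNReal.ofReal_lt_top⟩
  haveI : IsFiniteMeasure ν := ⟨by rw [hν]; exact ENNReal.ofReal_lt_top⟩
  have hprod : μ.prod ν ∈ Hrep m μ ν := by
    intro A hA
    constructor
    · rw [Measure.prod_prod, hν, mul_comm]
    · rw [Measure.prod_prod, hμ]
  have hfc : Continuous f := by
    have : LipschitzWith 1 f := LipschitzWith.of_dist_le_mul fun a b => by
      rw [NNReal.coe_one, one_mul, Real.dist_eq]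
      exact (hf a b).trans (min_le_right _ _)
    exact this.continuous
  have hfb : ∀ x : Euc d, ‖f x‖ ≤ |f 0| + 1 := fun x => by
    have h1 := (hf x 0).trans (rho_le_one' x 0)
    have h2 : |f x| - |f 0| ≤ |f x - f 0| := abs_sub_abs_le_abs_sub _ _
    rw [Real.norm_eq_abs]; linarith
  refine le_csInf ⟨_, Set.mem_image_of_mem _ hprod⟩ ?_
  rintro x ⟨Q, hQ, rfl⟩
  simp only [rpow_two'']
  -- Q is a finite measure
  have hQuniv : Q Set.univ = ENNReal.ofReal m * ENNReal.ofReal m := by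
    rw [← Set.univ_prod_univ, (hQ Set.univ MeasurableSet.univ).1, hμ]
  haveI : IsFiniteMeasure Q := ⟨by rw [hQuniv]; exact ENNReal.mul_lt_top ENNReal.ofReal_lt_top ENNReal.ofReal_lt_top⟩
  set g : Euc d × Euc d → ℝ := fun z => rho z.1 z.2 with hg_def
  have hgc : Continuous g := continuous_const.min (continuous_fst.dist continuous_snd)
  have hg0 : ∀ z, 0 ≤ g z := fun z => rho_nonneg' _ _
  have hg1 : ∀ z, g z ≤ 1 := fun z => rho_le_one' _ _
  have hg_int : Integrable g Q :=
    (integrable_const (1:ℝ)).mono' hgc.aestronglyMeasurable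
      (ae_of_all _ fun z => by rw [Real.norm_eq_abs, abs_of_nonneg (hg0 z)]; exact hg1 z)
  have hg2_int : Integrable (fun z => g z ^ 2) Q :=
    (integrable_const (1:ℝ)).mono' ((hgc.pow 2).aestronglyMeasurable)
      (ae_of_all _ fun z => by
        rw [Real.norm_eq_abs, abs_of_nonneg (sq_nonneg _)]
        nlinarith [hg0 z, hg1 z])
  have hf1_int : Integrable (fun z : Euc d × Euc d => f z.1) Q :=
    (integrable_const (|f 0| + 1)).mono' ((hfc.comp continuous_fst).aestronglyMeasurable)
      (ae_of_all _ fun z => hfb _)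
  have hf2_int : Integrable (fun z : Euc d × Euc d => f z.2) Q :=
    (integrable_const (|f 0| + 1)).mono' ((hfc.comp continuous_snd).aestronglyMeasurable)
      (ae_of_all _ fun z => hfb _)
  -- marginals
  have hmap1 : Q.map Prod.fst = ENNReal.ofReal m • μ := by
    ext A hA
    rw [Measure.map_apply measurable_fst hA, Measure.smul_apply, smul_eq_mul, ← Set.prod_univ]
    exact (hQ A hA).1
  have hmap2 : Q.map Prod.snd = ENNReal.ofReal m • ν := by
    ext A hA
    rw [Measure.map_apply measurable_snd hA, Measure.smul_apply, smul_eq_mul, ← Set.univ_prod]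
    exact (hQ A hA).2
  have hfst : ∫ z, f z.1 ∂Q = m * ∫ x, f x ∂μ := by
    rw [← integral_map measurable_fst.aemeasurable (by rw [hmap1]; exact hfc.aestronglyMeasurable),
      hmap1, integral_smul_measure, ENNReal.toReal_ofReal hm0, smul_eq_mul]
  have hsnd : ∫ z, f z.2 ∂Q = m * ∫ x, f x ∂ν := by
    rw [← integral_map measurable_snd.aemeasurable (by rw [hmap2]; exact hfc.aestronglyMeasurable),
      hmap2, integral_smul_measure, ENNReal.toReal_ofReal hm0, smul_eq_mul]
  have hsub : m * (∫ x, f x ∂μ - ∫ x, f x ∂ν) = ∫ z, (f z.1 - f z.2) ∂Q := by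
    rw [integral_sub hf1_int hf2_int, hfst, hsnd]; ring
  set R := ∫ z, g z ∂Q with hR_def
  set s := ∫ z, g z ^ 2 ∂Q with hs_def
  have hR0 : 0 ≤ R := integral_nonneg hg0
  have hs0 : 0 ≤ s := integral_nonneg fun z => sq_nonneg _
  have habs : |∫ z, (f z.1 - f z.2) ∂Q| ≤ R := by
    calc |∫ z, (f z.1 - f z.2) ∂Q| = ‖∫ z, (f z.1 - f z.2) ∂Q‖ := (Real.norm_eq_abs _).symm
    _ ≤ ∫ z, ‖f z.1 - f z.2‖ ∂Q := norm_integral_le_integral_norm _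
    _ ≤ R := integral_mono (hf1_int.sub hf2_int).norm hg_int fun z => by
        rw [Real.norm_eq_abs]; exact hf _ _
  have hM : (Q Set.univ).toReal = m * m := by
    rw [hQuniv, ← ENNReal.ofReal_mul hm0, ENNReal.toReal_ofReal (by positivity)]
  have hCS : R ^ 2 ≤ (m * m) * s := by
    rcases eq_or_lt_of_le hR0 with h | h
    · rw [← h]; nlinarith [hs0, mul_nonneg (mul_nonneg hm0 hm0) hs0]
    · set t := R / (m * m) with ht_def
      have hmm : (0:ℝ) < m * m := by positivity
      have ht : 0 < t := div_pos h hmm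
      have hpt : ∀ z, g z ≤ g z ^ 2 / (2 * t) + t / 2 := fun z => by
        have h2 : 2 * t * g z ≤ g z ^ 2 + t ^ 2 := by nlinarith [sq_nonneg (g z - t)]
        rw [div_add' _ _ _ (by positivity)]
        rw [le_div_iff₀ (by positivity)]
        nlinarith
      have hsum_int : Integrable (fun z => g z ^ 2 / (2 * t) + t / 2) Q :=
        (hg2_int.div_const _).add (integrable_const _)
      have hInt : ∫ z, (g z ^ 2 / (2 * t) + t / 2) ∂Q = s / (2 * t) + (Q Set.univ).toReal * (t / 2) := by
        rw [integral_add (hg2_int.div_const _) (integrable_const _), integral_div,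
          integral_const, smul_eq_mul]
        rfl
      have hRle : R ≤ s / (2 * t) + (m * m) * (t / 2) := by
        calc R ≤ ∫ z, (g z ^ 2 / (2 * t) + t / 2) ∂Q := integral_mono hg_int hsum_int hpt
        _ = s / (2 * t) + (m * m) * (t / 2) := by rw [hInt, hM]
      rw [ht_def] at hRle
      have h3 : s / (2 * (R / (m * m))) = s * (m * m) / (2 * R) := by
        rw [div_eq_div_iff (by positivity) (by positivity)]; field_simp
      have h4 : (m * m) * (R / (m * m) / 2) = R / 2 := by field_simp
      rw [h3, h4] at hRle
      have h5 : R / 2 ≤ s * (m * m) / (2 * R) := by linarith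
      rw [le_div_iff₀ (by positivity : (0:ℝ) < 2 * R)] at h5
      nlinarith [h5]
  have hfinal : (m * (∫ x, f x ∂μ - ∫ x, f x ∂ν)) ^ 2 ≤ (m * m) * s := by
    rw [hsub]
    calc (∫ z, (f z.1 - f z.2) ∂Q) ^ 2 = |∫ z, (f z.1 - f z.2) ∂Q| ^ 2 := (sq_abs _).symm
    _ ≤ R ^ 2 := pow_le_pow_left₀ (abs_nonneg _) habs 2
    _ ≤ (m * m) * s := hCS
  have hmm : (0:ℝ) < m * m := by positivity
  have h6 : m * m * ((∫ x, f x ∂μ - ∫ x, f x ∂ν) ^ 2) ≤ m * m * s := by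
    calc m * m * ((∫ x, f x ∂μ - ∫ x, f x ∂ν) ^ 2)
        = (m * (∫ x, f x ∂μ - ∫ x, f x ∂ν)) ^ 2 := by ring
    _ ≤ m * m * s := hfinal
  exact le_of_mul_le_mul_left h6 hmm

/-- for `f` with minimal Lipschitz constant (w.r.t. `ρ`) at most 1,
`<μ−ν, f>² ≤ 2m²·γ_2((μ¹,μ²),(ν¹,ν²))²`, where `μ = μ¹ − μ²`, `ν = ν¹ − ν²` and
`m = max(m₁,m₂)`; consequently the same bound holds for the supremum over all such `f`. -/
theorem sq_integral_sub_le_gamma2 {d : ℕ} (hd : 1 ≤ d) (m₁ m₂ : ℝ)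
    (hm₁ : 1 ≤ m₁) (hm₂ : 1 ≤ m₂)
    (μ1 μ2 ν1 ν2 : Measure (Euc d))
    (hμ1 : μ1 ∈ Mset d m₁) (hν1 : ν1 ∈ Mset d m₁)
    (hμ2 : μ2 ∈ Mset d m₂) (hν2 : ν2 ∈ Mset d m₂) :
    (∀ f : Euc d → ℝ, (∀ a b : Euc d, |f a - f b| ≤ rho a b) →
      ((∫ x, f x ∂μ1 - ∫ x, f x ∂μ2) - (∫ x, f x ∂ν1 - ∫ x, f x ∂ν2)) ^ 2 ≤
        2 * max m₁ m₂ ^ 2 * gammap 2 m₁ m₂ (μ1, μ2) (ν1, ν2) ^ 2) ∧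
    sSup {r : ℝ | ∃ f : Euc d → ℝ, (∀ a b : Euc d, |f a - f b| ≤ rho a b) ∧
        r = ((∫ x, f x ∂μ1 - ∫ x, f x ∂μ2) - (∫ x, f x ∂ν1 - ∫ x, f x ∂ν2)) ^ 2} ≤
      2 * max m₁ m₂ ^ 2 * gammap 2 m₁ m₂ (μ1, μ2) (ν1, ν2) ^ 2 := by
  have hμ1' : μ1 Set.univ = ENNReal.ofReal m₁ := hμ1
  have hν1' : ν1 Set.univ = ENNReal.ofReal m₁ := hν1
  have hμ2' : μ2 Set.univ = ENNReal.ofReal m₂ := hμ2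
  have hν2' : ν2 Set.univ = ENNReal.ofReal m₂ := hν2
  set S₁ := sInf ((fun Q : Measure (Euc d × Euc d) => ∫ z, rho z.1 z.2 ^ (2:ℝ) ∂Q) '' Hrep m₁ μ1 ν1) with hS₁def
  set S₂ := sInf ((fun Q : Measure (Euc d × Euc d) => ∫ z, rho z.1 z.2 ^ (2:ℝ) ∂Q) '' Hrep m₂ μ2 ν2) with hS₂def
  have hS₁0 : 0 ≤ S₁ := by
    have h0 := key_lemma hm₁ hμ1' hν1' (f := fun _ => (0:ℝ))
      (fun a b => by simpa using rho_nonneg' a b)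
    simp only [integral_zero, sub_self] at h0
    calc (0:ℝ) = 0 ^ 2 := by norm_num
    _ ≤ S₁ := h0
  have hS₂0 : 0 ≤ S₂ := by
    have h0 := key_lemma hm₂ hμ2' hν2' (f := fun _ => (0:ℝ))
      (fun a b => by simpa using rho_nonneg' a b)
    simp only [integral_zero, sub_self] at h0
    calc (0:ℝ) = 0 ^ 2 := by norm_num
    _ ≤ S₂ := h0
  have hW1 : Wp 2 m₁ μ1 ν1 ^ (2:ℝ) = S₁ := by
    rw [Wp, ← Real.rpow_mul hS₁0]; norm_num
  have hW2 : Wp 2 m₂ μ2 ν2 ^ (2:ℝ) = S₂ := by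
    rw [Wp, ← Real.rpow_mul hS₂0]; norm_num
  have hgamma : gammap 2 m₁ m₂ (μ1, μ2) (ν1, ν2) ^ 2 = S₁ + S₂ := by
    rw [gammap]
    simp only
    rw [hW1, hW2, ← Real.rpow_natCast _ 2, ← Real.rpow_mul (by linarith)]
    norm_num
  have hM1 : 1 ≤ max m₁ m₂ := le_trans hm₁ (le_max_left _ _)
  have hM2 : 1 ≤ (max m₁ m₂) ^ 2 := by nlinarith
  have main : ∀ f : Euc d → ℝ, (∀ a b : Euc d, |f a - f b| ≤ rho a b) →
      ((∫ x, f x ∂μ1 - ∫ x, f x ∂μ2) - (∫ x, f x ∂ν1 - ∫ x, f x ∂ν2)) ^ 2 ≤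
        2 * max m₁ m₂ ^ 2 * gammap 2 m₁ m₂ (μ1, μ2) (ν1, ν2) ^ 2 := by
    intro f hfl
    have ha := key_lemma hm₁ hμ1' hν1' hfl
    have hb := key_lemma hm₂ hμ2' hν2' hfl
    rw [hgamma]
    have hkey : (0:ℝ) ≤ ((max m₁ m₂) ^ 2 - 1) * (S₁ + S₂) :=
      mul_nonneg (by linarith) (by linarith)
    nlinarith [ha, hb, sq_nonneg ((∫ x, f x ∂μ1 - ∫ x, f x ∂ν1) + (∫ x, f x ∂μ2 - ∫ x, f x ∂ν2))]
  refine ⟨main, Real.sSup_le ?_ ?_⟩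
  · rintro r ⟨f, hfl, rfl⟩
    exact main f hfl
  · rw [hgamma]
    have := mul_nonneg (mul_nonneg (by norm_num : (0:ℝ) ≤ 2) (sq_nonneg (max m₁ m₂)))
      (add_nonneg hS₁0 hS₂0)
    linarith
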